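/- Approximation guarantee of the modulus algorithm: let Γ be a family of walks in a finite graph, 1 ≤ p < ∞, and 0 < ε < 1. Suppose Γ' ⊆ Γ and ρ is the extremal density for Mod_p(Γ') (so E_p(ρ)=Mod_p(Γ')), and suppose every γ ∈ Γ satisfies ℓ_ρ(γ)^p ≥ 1−ε. Then (Mod_p(Γ) − Mod_p(Γ'))/Mod_p(Γ) ≤ ε. -/

import Mathlib

open scoped ENNReal

variable {V : Type*} [DecidableEq V] {G : SimpleGraph V} [Fintype G.edgeSet]

/-- A walk in `G` with arbitrary endpoints. -/
abbrev GWalk (G : SimpleGraph V) : Type _ := Σ u : V, Σ v : V, G.Walk u v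

/-- The `ρ`-length of a walk: sum of `ρ` over traversed edges with multiplicity. -/
def wlen (ρ : G.edgeSet → ℝ) (γ : GWalk G) : ℝ :=
  ∑ e : G.edgeSet, (γ.2.2.edges.count (e : Sym2 V) : ℝ) * ρ e

/-- Admissible densities for a family of walks. -/
def Adm (Γ : Set (GWalk G)) : Set (G.edgeSet → ℝ) :=
  {ρ | (∀ e, 0 ≤ ρ e) ∧ ∀ γ ∈ Γ, 1 ≤ wlen ρ γ}

/-- The energy of a density. -/
def energy (G : SimpleGraph V) [Fintype G.edgeSet] (ρ : G.edgeSet → ℝ) : ℝ :=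
  ∑ e, ρ e ^ 2

/-- The modulus of a family of walks. -/
noncomputable def GMod (Γ : Set (GWalk G)) : ℝ≥0∞ :=
  sInf ((fun ρ => ENNReal.ofReal (energy G ρ)) '' Adm Γ)

/-- The `p`-energy of a density. -/
noncomputable def energyP (G : SimpleGraph V) [Fintype G.edgeSet] (p : ℝ) (ρ : G.edgeSet → ℝ) : ℝ :=
  ∑ e, ρ e ^ p

/-- The `p`-modulus of a family of walks. -/
noncomputable def GModP (p : ℝ) (Γ : Set (GWalk G)) : ℝ≥0∞ :=
  sInf ((fun ρ => ENNReal.ofReal (energyP G p ρ)) '' Adm Γ)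

theorem algorithm_approximation (p ε : ℝ) (hp : 1 ≤ p) (hε0 : 0 < ε) (hε1 : ε < 1)
    (Γ Γ' : Set (GWalk G)) (hsub : Γ' ⊆ Γ) (ρ : G.edgeSet → ℝ)
    (hρ : ρ ∈ Adm Γ') (hext : ENNReal.ofReal (energyP G p ρ) = GModP p Γ')
    (hshort : ∀ γ ∈ Γ, 1 - ε ≤ wlen ρ γ ^ p) :
    (GModP p Γ - GModP p Γ') / GModP p Γ ≤ ENNReal.ofReal ε := by
  have hp0 : 0 < p := lt_of_lt_of_le one_pos hp
  have h1ε : (0:ℝ) < 1 - ε := by linarith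
  set c : ℝ := (1 - ε) ^ p⁻¹ with hc_def
  have hc : 0 < c := Real.rpow_pos_of_pos h1ε _
  have hcp : c ^ p = 1 - ε := by
    rw [hc_def, ← Real.rpow_mul h1ε.le, inv_mul_cancel₀ hp0.ne', Real.rpow_one]
  -- the rescaled density
  set σ : G.edgeSet → ℝ := fun e => ρ e / c with hσ_def
  have hσadm : σ ∈ Adm Γ := by
    constructor
    · intro e; exact div_nonneg (hρ.1 e) hc.le
    · intro γ hγ
      have hlin : wlen σ γ = wlen ρ γ / c := by
        simp only [wlen, hσ_def]
        rw [Finset.sum_div]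
        congr 1; ext e; ring
      have hw0 : 0 ≤ wlen ρ γ := by
        apply Finset.sum_nonneg
        intro e _
        exact mul_nonneg (Nat.cast_nonneg _) (hρ.1 e)
      have hwc : c ≤ wlen ρ γ := by
        by_contra h
        push_neg at h
        have := Real.rpow_lt_rpow hw0 h hp0
        rw [hcp] at this
        exact absurd (hshort γ hγ) (not_le.mpr this)
      rw [hlin]
      exact (one_le_div hc).mpr hwc
  -- energy of σ
  have hEσ : energyP G p σ = energyP G p ρ / (1 - ε) := by
    simp only [energyP, hσ_def]
    rw [Finset.sum_div]
    congr 1; ext e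
    rw [Real.div_rpow (hρ.1 e) hc.le, hcp]
  -- bound on GModP p Γ
  have hA : GModP p Γ ≤ ENNReal.ofReal (energyP G p ρ) / ENNReal.ofReal (1 - ε) := by
    have hmem : ENNReal.ofReal (energyP G p σ) ∈
        ((fun ρ => ENNReal.ofReal (energyP G p ρ)) '' Adm Γ) := ⟨σ, hσadm, rfl⟩
    calc GModP p Γ ≤ ENNReal.ofReal (energyP G p σ) := sInf_le hmem
      _ = ENNReal.ofReal (energyP G p ρ) / ENNReal.ofReal (1 - ε) := by
          rw [hEσ, ENNReal.ofReal_div_of_pos h1ε]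
  set A := GModP p Γ
  set B := GModP p Γ'
  have hB : B = ENNReal.ofReal (energyP G p ρ) := hext.symm
  have hne0 : ENNReal.ofReal (1 - ε) ≠ 0 := by
    simp only [ne_eq, ENNReal.ofReal_eq_zero, not_le]
    linarith
  have hmul : ENNReal.ofReal (1 - ε) * A ≤ B := by
    rw [hB, mul_comm]
    exact (ENNReal.le_div_iff_mul_le (Or.inl hne0) (Or.inl ENNReal.ofReal_ne_top)).mp hA
  have hsplit : A ≤ ENNReal.ofReal ε * A + B := by
    calc A = (ENNReal.ofReal ε + ENNReal.ofReal (1 - ε)) * A := by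
            rw [← ENNReal.ofReal_add hε0.le h1ε.le]
            norm_num
      _ = ENNReal.ofReal ε * A + ENNReal.ofReal (1 - ε) * A := by ring
      _ ≤ ENNReal.ofReal ε * A + B := add_le_add_right hmul _
  have hsub' : A - B ≤ ENNReal.ofReal ε * A := tsub_le_iff_right.mpr hsplit
  calc (A - B) / A ≤ (ENNReal.ofReal ε * A) / A := ENNReal.div_le_div_right hsub' A
    _ = ENNReal.ofReal ε * (A / A) := by rw [mul_div_assoc]
    _ ≤ ENNReal.ofReal ε * 1 := mul_le_mul_right ENNReal.div_self_le_one _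
    _ = ENNReal.ofReal ε := mul_one _
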